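/- Let c ≠ 0 and let f, g : ℝ → ℝ be functions with sup_{u ∈ [u₀-ε, u₀+ε]} |f(u) - g(u)| ≤ η. Suppose g(u) = m + c(u - u₀) is affine. Then the set {u ∈ [u₀-ε, u₀+ε] : 1{f(u) ≤ 0} ≠ 1{g(u) ≤ 0}} is contained in an interval of length at most 2η/|c|, and consequently |∫_{u₀-ε}^{u₀+ε} (1{f(u) ≤ 0} - 1{g(u) ≤ 0}) du| ≤ 2η/|c|. -/

import Mathlib

open MeasureTheory Set

theorem stmt_4 (f g : ℝ → ℝ) (c m u₀ ε η : ℝ) (hc : c ≠ 0) (hε : 0 < ε) (hη : 0 ≤ η)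
    (hclose : ∀ u ∈ Icc (u₀ - ε) (u₀ + ε), |f u - g u| ≤ η)
    (hg : ∀ u, g u = m + c * (u - u₀)) :
    (∃ l r : ℝ, r - l ≤ 2 * η / |c| ∧
        {u ∈ Icc (u₀ - ε) (u₀ + ε) |
          ¬ ((if f u ≤ 0 then (1:ℝ) else 0) = (if g u ≤ 0 then (1:ℝ) else 0))}
          ⊆ Icc l r) ∧
      |∫ u in (u₀ - ε)..(u₀ + ε),
          ((if f u ≤ 0 then (1:ℝ) else 0) - (if g u ≤ 0 then (1:ℝ) else 0))|
        ≤ 2 * η / |c| := by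
  have hcabs : (0:ℝ) < |c| := abs_pos.mpr hc
  have hδ : 0 ≤ η / |c| := div_nonneg hη hcabs.le
  set a := u₀ - ε with ha
  set b := u₀ + ε with hb
  set s := u₀ - m / c with hs
  set l := s - η / |c| with hl
  set r := s + η / |c| with hr
  have hrl' : r - l = 2 * η / |c| := by rw [hr, hl]; ring
  have hlr : l ≤ r := by rw [hr, hl]; linarith
  have key : ∀ u ∈ Icc a b,
      ¬((if f u ≤ 0 then (1:ℝ) else 0) = (if g u ≤ 0 then (1:ℝ) else 0)) → u ∈ Icc l r := by
    intro u hu hne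
    have hfg := hclose u hu
    have hgform : g u = c * (u - s) := by rw [hg, hs]; field_simp; ring
    have habs : |g u| ≤ η := by
      by_cases hf : f u ≤ 0 <;> by_cases hgle : g u ≤ 0 <;>
        simp [hf, hgle] at hne ⊢
      · push_neg at hgle
        have h2 : g u - f u ≤ η := by
          have := abs_le.mp hfg; linarith [this.1]
        rw [abs_of_pos hgle]; linarith
      · push_neg at hf
        have h3 : f u - g u ≤ η := (abs_le.mp hfg).2
        rw [abs_of_nonpos hgle]; linarith
    have hmul : |c| * |u - s| ≤ η := by
      rw [← abs_mul, ← hgform]; exact habs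
    have hus : |u - s| ≤ η / |c| := by
      rw [le_div_iff₀ hcabs]; linarith [mul_comm (|c|) (|u - s|)]
    have h5 := abs_le.mp hus
    rw [Set.mem_Icc, hl, hr]
    constructor <;> linarith [h5.1, h5.2]
  refine ⟨⟨l, r, hrl'.le, ?_⟩, ?_⟩
  · intro u hu
    exact key u hu.1 hu.2
  · set h : ℝ → ℝ := fun u =>
      (if f u ≤ 0 then (1:ℝ) else 0) - (if g u ≤ 0 then (1:ℝ) else 0) with hh
    have hab : a ≤ b := by rw [ha, hb]; linarith
    by_cases hint : IntervalIntegrable h volume a b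
    · have h1 : |∫ u in a..b, h u| ≤ ∫ u in a..b, |h u| :=
        intervalIntegral.abs_integral_le_integral_abs hab
      have h2 : ∀ u ∈ Icc a b, |h u| ≤ (Icc l r).indicator (fun _ => (1:ℝ)) u := by
        intro u hu
        by_cases hne : (if f u ≤ 0 then (1:ℝ) else 0) = (if g u ≤ 0 then (1:ℝ) else 0)
        · simp only [hh, hne, sub_self, abs_zero]
          exact Set.indicator_nonneg (fun _ _ => zero_le_one) u
        · have hm := key u hu hne
          rw [Set.indicator_of_mem hm]
          simp only [hh]
          by_cases hf : f u ≤ 0 <;> by_cases hgle : g u ≤ 0 <;> simp [hf, hgle]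
      have hind : IntervalIntegrable ((Icc l r).indicator (fun _ => (1:ℝ))) volume a b := by
        rw [intervalIntegrable_iff]
        exact (integrableOn_const (C := (1:ℝ)) (μ := volume) (s := uIoc a b) measure_Ioc_lt_top.ne).indicator measurableSet_Icc
      have h3 : ∫ u in a..b, |h u| ≤ ∫ u in a..b, (Icc l r).indicator (fun _ => (1:ℝ)) u :=
        intervalIntegral.integral_mono_on hab hint.abs hind h2
      have h4 : ∫ u in a..b, (Icc l r).indicator (fun _ => (1:ℝ)) u ≤ r - l := by
        rw [intervalIntegral.integral_of_le hab,
          MeasureTheory.setIntegral_indicator measurableSet_Icc,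
          MeasureTheory.setIntegral_const, smul_eq_mul, mul_one]
        calc (volume (Ioc a b ∩ Icc l r)).toReal
            ≤ (volume (Icc l r)).toReal := by
              apply ENNReal.toReal_mono
              · simp [Real.volume_Icc]
              · exact measure_mono inter_subset_right
          _ = r - l := by rw [Real.volume_Icc, ENNReal.toReal_ofReal (by linarith)]
      calc |∫ u in a..b, h u| ≤ ∫ u in a..b, |h u| := h1
        _ ≤ r - l := le_trans h3 h4
        _ = 2 * η / |c| := hrl'
    · rw [intervalIntegral.integral_undef hint]
      simp only [abs_zero]
      positivity
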